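/- Gårding's inequality: Let 𝔇(v,u) = Σ_{j,k}(X_j v, a_{jk} X_k u)_φ + Σ_j (v, b_j X_j u)_φ + Σ_j (X_j v, b_j' u)_φ + (v, b u)_φ be a Dirichlet form with bounded coefficients a_{jk}, b_j, b_j', b on Ω, satisfying the strong ellipticity condition Re(Σ_{j,k} a̅_{jk} ξ_j ξ̅_k) ≥ θ|ξ|² for some θ > 0 and all ξ ∈ ℂⁿ. Then there exist C > 0 and λ ≥ 0 such that Re 𝔇(u,u) ≥ C ‖u‖²_{W^{1,2}(Ω,φ;X)} - λ‖u‖²_{L²(Ω,φ)} for all u ∈ W^{1,2}(Ω,φ;X). -/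

import Mathlib

open MeasureTheory Real Filter

noncomputable section


/-- Integrability of a product term in the Dirichlet form. -/
lemma cross_integrable {α : Type*} [MeasurableSpace α] {μ : Measure α}
    {f g c : α → ℂ} {w : α → ℝ} {M : ℝ} (hM : 0 ≤ M)
    (hf : AEStronglyMeasurable f μ) (hg : AEStronglyMeasurable g μ)
    (hc : AEStronglyMeasurable c μ) (hw : AEStronglyMeasurable w μ)
    (hw0 : ∀ x, 0 ≤ w x)
    (hcM : ∀ᵐ x ∂μ, ‖c x‖ ≤ M)
    (hf2 : Integrable (fun x => ‖f x‖ ^ 2 * w x) μ)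
    (hg2 : Integrable (fun x => ‖g x‖ ^ 2 * w x) μ) :
    Integrable (fun x => f x * (starRingEnd ℂ) (c x * g x) * ((w x : ℝ) : ℂ)) μ := by
  have hmeas : AEStronglyMeasurable
      (fun x => f x * (starRingEnd ℂ) (c x * g x) * ((w x : ℝ) : ℂ)) μ := by
    exact (hf.mul (Complex.continuous_conj.comp_aestronglyMeasurable (hc.mul hg))).mul
      (Complex.continuous_ofReal.comp_aestronglyMeasurable hw)
  refine Integrable.mono' (((hf2.add hg2).const_mul (M / 2))) hmeas ?_
  filter_upwards [hcM] with x hx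
  have h1 : ‖f x * (starRingEnd ℂ) (c x * g x) * ((w x : ℝ) : ℂ)‖
      = ‖f x‖ * (‖c x‖ * ‖g x‖) * w x := by
    simp [norm_mul, abs_of_nonneg (hw0 x)]
  rw [h1]
  have hfg : ‖f x‖ * (‖c x‖ * ‖g x‖) ≤ M / 2 * (‖f x‖ ^ 2 + ‖g x‖ ^ 2) := by
    nlinarith [sq_nonneg (‖f x‖ - ‖g x‖), norm_nonneg (f x), norm_nonneg (g x),
      norm_nonneg (c x), hx, hM, mul_nonneg (norm_nonneg (f x)) (norm_nonneg (g x))]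
  calc ‖f x‖ * (‖c x‖ * ‖g x‖) * w x ≤ M / 2 * (‖f x‖ ^ 2 + ‖g x‖ ^ 2) * w x :=
        mul_le_mul_of_nonneg_right hfg (hw0 x)
    _ = M / 2 * (‖f x‖ ^ 2 * w x + ‖g x‖ ^ 2 * w x) := by ring

/-- Lower bound on the real part of a cross term. -/
lemma cross_bound {α : Type*} [MeasurableSpace α] {μ : Measure α}
    {f g c : α → ℂ} {w : α → ℝ} {M δ ε : ℝ} (hM : 0 ≤ M)
    (hδ : 0 < δ) (hε : 0 < ε) (hδε : δ * ε = 1)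
    (hf : AEStronglyMeasurable f μ) (hg : AEStronglyMeasurable g μ)
    (hc : AEStronglyMeasurable c μ) (hw : AEStronglyMeasurable w μ)
    (hw0 : ∀ x, 0 ≤ w x)
    (hcM : ∀ᵐ x ∂μ, ‖c x‖ ≤ M)
    (hf2 : Integrable (fun x => ‖f x‖ ^ 2 * w x) μ)
    (hg2 : Integrable (fun x => ‖g x‖ ^ 2 * w x) μ) :
    -((M * δ / 2) * ∫ x, ‖f x‖ ^ 2 * w x ∂μ + (M * ε / 2) * ∫ x, ‖g x‖ ^ 2 * w x ∂μ)
      ≤ (∫ x, f x * (starRingEnd ℂ) (c x * g x) * ((w x : ℝ) : ℂ) ∂μ).re := by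
  have hI := cross_integrable hM hf hg hc hw hw0 hcM hf2 hg2
  have hre : (∫ x, f x * (starRingEnd ℂ) (c x * g x) * ((w x : ℝ) : ℂ) ∂μ).re
      = ∫ x, (f x * (starRingEnd ℂ) (c x * g x) * ((w x : ℝ) : ℂ)).re ∂μ :=
    (Complex.reCLM.integral_comp_comm hI).symm
  rw [hre]
  have hIr : Integrable
      (fun x => (f x * (starRingEnd ℂ) (c x * g x) * ((w x : ℝ) : ℂ)).re) μ :=
    Complex.reCLM.integrable_comp hI
  have hbound : Integrable
      (fun x => -((M * δ / 2) * (‖f x‖ ^ 2 * w x) + (M * ε / 2) * (‖g x‖ ^ 2 * w x))) μ :=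
    ((hf2.const_mul _).add (hg2.const_mul _)).neg
  have hmono : ∫ x, -((M * δ / 2) * (‖f x‖ ^ 2 * w x) + (M * ε / 2) * (‖g x‖ ^ 2 * w x)) ∂μ
      ≤ ∫ x, (f x * (starRingEnd ℂ) (c x * g x) * ((w x : ℝ) : ℂ)).re ∂μ := by
    refine integral_mono_ae hbound hIr ?_
    filter_upwards [hcM] with x hx
    have hnorm : ‖f x * (starRingEnd ℂ) (c x * g x) * ((w x : ℝ) : ℂ)‖
        = ‖f x‖ * (‖c x‖ * ‖g x‖) * w x := by
      simp [norm_mul, abs_of_nonneg (hw0 x)]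
    have hlow : -‖f x * (starRingEnd ℂ) (c x * g x) * ((w x : ℝ) : ℂ)‖
        ≤ (f x * (starRingEnd ℂ) (c x * g x) * ((w x : ℝ) : ℂ)).re := by
      have := Complex.abs_re_le_norm (f x * (starRingEnd ℂ) (c x * g x) * ((w x : ℝ) : ℂ))
      exact (abs_le.mp this).1
    have hkey : 2 * (‖f x‖ * ‖g x‖) ≤ δ * ‖f x‖ ^ 2 + ε * ‖g x‖ ^ 2 := by
      have h' : 0 ≤ ε * (δ * ‖f x‖ - ‖g x‖) ^ 2 := mul_nonneg hε.le (sq_nonneg _)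
      have hexp : ε * (δ * ‖f x‖ - ‖g x‖) ^ 2
          = δ * ‖f x‖ ^ 2 - 2 * (‖f x‖ * ‖g x‖) + ε * ‖g x‖ ^ 2 := by
        linear_combination (δ * ‖f x‖ ^ 2 - 2 * (‖f x‖ * ‖g x‖)) * hδε
      linarith [hexp ▸ h']
    have hprod : ‖f x‖ * (‖c x‖ * ‖g x‖)
        ≤ (M * δ / 2) * ‖f x‖ ^ 2 + (M * ε / 2) * ‖g x‖ ^ 2 := by
      nlinarith [hkey, hx, hM, norm_nonneg (c x),
        mul_nonneg (norm_nonneg (f x)) (norm_nonneg (g x))]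
    have := mul_le_mul_of_nonneg_right hprod (hw0 x)
    calc -((M * δ / 2) * (‖f x‖ ^ 2 * w x) + (M * ε / 2) * (‖g x‖ ^ 2 * w x))
        ≤ -(‖f x‖ * (‖c x‖ * ‖g x‖) * w x) := by nlinarith [this]
      _ = -‖f x * (starRingEnd ℂ) (c x * g x) * ((w x : ℝ) : ℂ)‖ := by rw [hnorm]
      _ ≤ _ := hlow
  calc -((M * δ / 2) * ∫ x, ‖f x‖ ^ 2 * w x ∂μ + (M * ε / 2) * ∫ x, ‖g x‖ ^ 2 * w x ∂μ)
      = ∫ x, -((M * δ / 2) * (‖f x‖ ^ 2 * w x) + (M * ε / 2) * (‖g x‖ ^ 2 * w x)) ∂μ := by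
        rw [integral_neg, integral_add (hf2.const_mul _) (hg2.const_mul _),
          integral_const_mul, integral_const_mul]
    _ ≤ _ := hmono


/-- Lower bound for the principal (elliptic) part. -/
lemma main_bound {α : Type*} [MeasurableSpace α] {μ : Measure α} {n : ℕ}
    {ξ : Fin n → α → ℂ} {A : Fin n → Fin n → α → ℂ} {w : α → ℝ} {θ M : ℝ} (hM : 0 ≤ M)
    (hξ : ∀ j, AEStronglyMeasurable (ξ j) μ)
    (hA : ∀ j k, AEStronglyMeasurable (A j k) μ)
    (hw : AEStronglyMeasurable w μ) (hw0 : ∀ x, 0 ≤ w x)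
    (hAM : ∀ j k, ∀ᵐ x ∂μ, ‖A j k x‖ ≤ M)
    (hξ2 : ∀ j, Integrable (fun x => ‖ξ j x‖ ^ 2 * w x) μ)
    (hell : ∀ᵐ x ∂μ, θ * (∑ j, ‖ξ j x‖ ^ 2)
        ≤ (∑ j : Fin n, ∑ k : Fin n,
            (starRingEnd ℂ) (A j k x) * ξ j x * (starRingEnd ℂ) (ξ k x)).re) :
    θ * ∑ j : Fin n, ∫ x, ‖ξ j x‖ ^ 2 * w x ∂μ
      ≤ (∑ j : Fin n, ∑ k : Fin n, ∫ x,
          ξ j x * (starRingEnd ℂ) (A j k x * ξ k x) * ((w x : ℝ) : ℂ) ∂μ).re := by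
  have hI : ∀ j k, Integrable
      (fun x => ξ j x * (starRingEnd ℂ) (A j k x * ξ k x) * ((w x : ℝ) : ℂ)) μ :=
    fun j k => cross_integrable hM (hξ j) (hξ k) (hA j k) hw hw0 (hAM j k) (hξ2 j) (hξ2 k)
  have hIr : ∀ j k : Fin n, Integrable
      (fun x => (ξ j x * (starRingEnd ℂ) (A j k x * ξ k x) * ((w x : ℝ) : ℂ)).re) μ :=
    fun j k => Complex.reCLM.integrable_comp (hI j k)
  have hre : (∑ j : Fin n, ∑ k : Fin n, ∫ x,
        ξ j x * (starRingEnd ℂ) (A j k x * ξ k x) * ((w x : ℝ) : ℂ) ∂μ).re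
      = ∫ x, ∑ j : Fin n, ∑ k : Fin n,
          (ξ j x * (starRingEnd ℂ) (A j k x * ξ k x) * ((w x : ℝ) : ℂ)).re ∂μ := by
    rw [Complex.re_sum]
    have hj : ∀ j : Fin n, (∑ k : Fin n, ∫ x,
        ξ j x * (starRingEnd ℂ) (A j k x * ξ k x) * ((w x : ℝ) : ℂ) ∂μ).re
        = ∫ x, ∑ k : Fin n,
            (ξ j x * (starRingEnd ℂ) (A j k x * ξ k x) * ((w x : ℝ) : ℂ)).re ∂μ := by
      intro j
      rw [Complex.re_sum,
        integral_finset_sum _ (fun k _ => hIr j k)]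
      exact Finset.sum_congr rfl fun k _ => (Complex.reCLM.integral_comp_comm (hI j k)).symm
    calc ∑ j : Fin n, (∑ k : Fin n, ∫ x,
          ξ j x * (starRingEnd ℂ) (A j k x * ξ k x) * ((w x : ℝ) : ℂ) ∂μ).re
        = ∑ j : Fin n, ∫ x, ∑ k : Fin n,
            (ξ j x * (starRingEnd ℂ) (A j k x * ξ k x) * ((w x : ℝ) : ℂ)).re ∂μ :=
          Finset.sum_congr rfl fun j _ => hj j
      _ = _ := (integral_finset_sum _ (fun j _ => integrable_finset_sum _
          (fun k _ => hIr j k))).symm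
  rw [hre]
  have hlhs : θ * ∑ j : Fin n, ∫ x, ‖ξ j x‖ ^ 2 * w x ∂μ
      = ∫ x, θ * ∑ j : Fin n, ‖ξ j x‖ ^ 2 * w x ∂μ := by
    rw [integral_const_mul, integral_finset_sum _ (fun j _ => hξ2 j)]
  rw [hlhs]
  refine integral_mono_ae
    ((integrable_finset_sum _ (fun j _ => hξ2 j)).const_mul θ)
    (integrable_finset_sum _ (fun j _ => integrable_finset_sum _
      (fun k _ => hIr j k))) ?_
  filter_upwards [hell] with x hx
  have hterm : ∀ j k : Fin n,
      (ξ j x * (starRingEnd ℂ) (A j k x * ξ k x) * ((w x : ℝ) : ℂ)).re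
        = ((starRingEnd ℂ) (A j k x) * ξ j x * (starRingEnd ℂ) (ξ k x)).re * w x := by
    intro j k
    rw [map_mul]
    rw [show ξ j x * ((starRingEnd ℂ) (A j k x) * (starRingEnd ℂ) (ξ k x))
        = (starRingEnd ℂ) (A j k x) * ξ j x * (starRingEnd ℂ) (ξ k x) from by ring]
    rw [mul_comm _ ((w x : ℝ) : ℂ), Complex.re_ofReal_mul, mul_comm]
  calc θ * ∑ j : Fin n, ‖ξ j x‖ ^ 2 * w x
      = (θ * ∑ j : Fin n, ‖ξ j x‖ ^ 2) * w x := by rw [← Finset.sum_mul]; ring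
    _ ≤ (∑ j : Fin n, ∑ k : Fin n,
          (starRingEnd ℂ) (A j k x) * ξ j x * (starRingEnd ℂ) (ξ k x)).re * w x :=
        mul_le_mul_of_nonneg_right hx (hw0 x)
    _ = ∑ j : Fin n, ∑ k : Fin n,
          (ξ j x * (starRingEnd ℂ) (A j k x * ξ k x) * ((w x : ℝ) : ℂ)).re := by
        rw [Complex.re_sum, Finset.sum_mul]
        refine Finset.sum_congr rfl fun j _ => ?_
        rw [Complex.re_sum, Finset.sum_mul]
        exact Finset.sum_congr rfl fun k _ => (hterm j k).symm




/-- The `j`-th partial derivative `∂g/∂x_j`. -/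
def pd {n : ℕ} {V : Type*} [NormedAddCommGroup V] [NormedSpace ℝ V]
    (j : Fin n) (g : (Fin n → ℝ) → V) (x : Fin n → ℝ) : V :=
  fderiv ℝ g x (Pi.single j 1)

/-- The weighted differential operator `X_j = ∂/∂x_j - (∂φ/∂x_j)`. -/
def Xop {n : ℕ} (φ : (Fin n → ℝ) → ℝ) (j : Fin n) (g : (Fin n → ℝ) → ℂ)
    (x : Fin n → ℝ) : ℂ :=
  pd j g x - ((pd j φ x : ℝ) : ℂ) * g x

/-- The formal adjoint `X_j^* = -∂/∂x_j` of `X_j` with respect to the weighted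
inner product `(f,g)_φ = ∫_Ω f ḡ e^{-φ}`. -/
def Xstar {n : ℕ} (j : Fin n) (g : (Fin n → ℝ) → ℂ) (x : Fin n → ℝ) : ℂ :=
  -pd j g x

/-- Membership in `C_c^∞(Ω)`. -/
def IsTest {n : ℕ} (Ω : Set (Fin n → ℝ)) (f : (Fin n → ℝ) → ℂ) : Prop :=
  ContDiff ℝ (⊤ : ℕ∞) f ∧ HasCompactSupport f ∧ tsupport f ⊆ Ω


/-- Membership in `W^{1,2}(Ω,φ;X)` (for functions with classical derivatives):
`u` is differentiable on `Ω` and both `u` and the `X_j u` are in `L²(Ω,φ)`. -/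
def MemW1 {n : ℕ} (Ω : Set (Fin n → ℝ)) (φ : (Fin n → ℝ) → ℝ)
    (u : (Fin n → ℝ) → ℂ) : Prop :=
  (∀ x ∈ Ω, DifferentiableAt ℝ u x) ∧
    AEStronglyMeasurable u (volume.restrict Ω) ∧
    IntegrableOn (fun x => ‖u x‖ ^ 2 * Real.exp (-φ x)) Ω ∧
    ∀ j : Fin n, IntegrableOn (fun x => ‖Xop φ j u x‖ ^ 2 * Real.exp (-φ x)) Ω

/-- The Dirichlet form
`𝔇(v,u) = Σ_{jk}(X_j v, a_{jk} X_k u)_φ + Σ_j (v, b_j X_j u)_φ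
  + Σ_j (X_j v, b_j' u)_φ + (v, b u)_φ`,
with `(f,g)_φ = ∫_Ω f ḡ e^{-φ} dV`. -/
def Dform {n : ℕ} (Ω : Set (Fin n → ℝ)) (φ : (Fin n → ℝ) → ℝ)
    (a : Fin n → Fin n → (Fin n → ℝ) → ℂ) (b b' : Fin n → (Fin n → ℝ) → ℂ)
    (b0 : (Fin n → ℝ) → ℂ) (v u : (Fin n → ℝ) → ℂ) : ℂ :=
  (∑ j : Fin n, ∑ k : Fin n, ∫ x in Ω,
      Xop φ j v x * (starRingEnd ℂ) (a j k x * Xop φ k u x)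
        * ((Real.exp (-φ x) : ℝ) : ℂ))
    + (∑ j : Fin n, ∫ x in Ω,
        v x * (starRingEnd ℂ) (b j x * Xop φ j u x) * ((Real.exp (-φ x) : ℝ) : ℂ))
    + (∑ j : Fin n, ∫ x in Ω,
        Xop φ j v x * (starRingEnd ℂ) (b' j x * u x) * ((Real.exp (-φ x) : ℝ) : ℂ))
    + ∫ x in Ω, v x * (starRingEnd ℂ) (b0 x * u x) * ((Real.exp (-φ x) : ℝ) : ℂ)

/-- Gårding's inequality: if the Dirichlet form `𝔇` has bounded
coefficients `a_{jk}, b_j, b_j', b` on `Ω` and satisfies the strong ellipticity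
condition `Re(Σ_{jk} a̅_{jk} ξ_j ξ̄_k) ≥ θ|ξ|²` for some `θ > 0`, then there
exist `C > 0` and `λ ≥ 0` with
`Re 𝔇(u,u) ≥ C ‖u‖²_{W^{1,2}(Ω,φ;X)} - λ‖u‖²_{L²(Ω,φ)}`
for all `u ∈ W^{1,2}(Ω,φ;X)`. -/
theorem statement11 {n : ℕ} (Ω : Set (Fin n → ℝ)) (hΩ : IsOpen Ω)
    (φ : (Fin n → ℝ) → ℝ) (hφ : ContDiffOn ℝ (⊤ : ℕ∞) φ Ω)
    (a : Fin n → Fin n → (Fin n → ℝ) → ℂ) (b b' : Fin n → (Fin n → ℝ) → ℂ)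
    (b0 : (Fin n → ℝ) → ℂ)
    (ha : ∀ j k, Continuous (a j k)) (hb : ∀ j, Continuous (b j))
    (hb' : ∀ j, Continuous (b' j)) (hb0 : Continuous b0)
    (M : ℝ)
    (haM : ∀ j k, ∀ x ∈ Ω, ‖a j k x‖ ≤ M) (hbM : ∀ j, ∀ x ∈ Ω, ‖b j x‖ ≤ M)
    (hb'M : ∀ j, ∀ x ∈ Ω, ‖b' j x‖ ≤ M) (hb0M : ∀ x ∈ Ω, ‖b0 x‖ ≤ M)
    (θ : ℝ) (hθ : 0 < θ)
    (hell : ∀ x ∈ Ω, ∀ ξ : Fin n → ℂ,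
      θ * (∑ j : Fin n, ‖ξ j‖ ^ 2)
        ≤ (∑ j : Fin n, ∑ k : Fin n,
            (starRingEnd ℂ) (a j k x) * ξ j * (starRingEnd ℂ) (ξ k)).re) :
    ∃ C : ℝ, 0 < C ∧ ∃ lam : ℝ, 0 ≤ lam ∧
      ∀ u : (Fin n → ℝ) → ℂ, MemW1 Ω φ u →
        C * ((∫ x in Ω, ‖u x‖ ^ 2 * Real.exp (-φ x))
              + ∑ j : Fin n, ∫ x in Ω, ‖Xop φ j u x‖ ^ 2 * Real.exp (-φ x))
            - lam * ∫ x in Ω, ‖u x‖ ^ 2 * Real.exp (-φ x)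
          ≤ (Dform Ω φ a b b' b0 u u).re := by

  classical
  set M' : ℝ := max M 1 with hM'def
  have hM'1 : (1 : ℝ) ≤ M' := le_max_right _ _
  have hM'0 : (0 : ℝ) ≤ M' := le_trans zero_le_one hM'1
  have hM'pos : (0 : ℝ) < M' := lt_of_lt_of_le one_pos hM'1
  set ε : ℝ := θ / (2 * M') with hεdef
  set δ : ℝ := 2 * M' / θ with hδdef
  have hε : 0 < ε := by positivity
  have hδ : 0 < δ := by positivity
  have hδε : δ * ε = 1 := by
    rw [hδdef, hεdef]; field_simp
  have hεδ : ε * δ = 1 := by rw [mul_comm]; exact hδε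
  have e1 : M' * ε / 2 = θ / 4 := by rw [hεdef]; field_simp; ring
  have e2 : M' * δ / 2 = M' ^ 2 / θ := by rw [hδdef]; field_simp
  refine ⟨θ / 2, by positivity, 2 * n * M' ^ 2 / θ + M' + θ / 2, by positivity, ?_⟩
  intro u hu
  obtain ⟨hdiff, humeas, hu2, hX2⟩ := hu
  have hΩm : MeasurableSet Ω := hΩ.measurableSet
  set w : (Fin n → ℝ) → ℝ := fun x => Real.exp (-φ x) with hwdef
  have hw0 : ∀ x, 0 ≤ w x := fun x => (Real.exp_pos _).le
  have hw : AEStronglyMeasurable w (volume.restrict Ω) :=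
    (Real.continuous_exp.comp_continuousOn hφ.continuousOn.neg).aestronglyMeasurable hΩm
  have hξmeas : ∀ j : Fin n, AEStronglyMeasurable (Xop φ j u) (volume.restrict Ω) := by
    intro j
    have h1 : Measurable fun x => pd j u x :=
      measurable_fderiv_apply_const ℝ u (Pi.single j 1)
    have h2 : Measurable fun x => pd j φ x :=
      measurable_fderiv_apply_const ℝ φ (Pi.single j 1)
    exact h1.aestronglyMeasurable.sub
      (((Complex.measurable_ofReal.comp h2).aestronglyMeasurable).mul humeas)
  have haM' : ∀ j k, ∀ᵐ x ∂volume.restrict Ω, ‖a j k x‖ ≤ M' := fun j k =>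
    (ae_restrict_iff' hΩm).mpr (ae_of_all _ fun x hx => (haM j k x hx).trans (le_max_left _ _))
  have hbM' : ∀ j, ∀ᵐ x ∂volume.restrict Ω, ‖b j x‖ ≤ M' := fun j =>
    (ae_restrict_iff' hΩm).mpr (ae_of_all _ fun x hx => (hbM j x hx).trans (le_max_left _ _))
  have hb'M' : ∀ j, ∀ᵐ x ∂volume.restrict Ω, ‖b' j x‖ ≤ M' := fun j =>
    (ae_restrict_iff' hΩm).mpr (ae_of_all _ fun x hx => (hb'M j x hx).trans (le_max_left _ _))
  have hb0M' : ∀ᵐ x ∂volume.restrict Ω, ‖b0 x‖ ≤ M' :=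
    (ae_restrict_iff' hΩm).mpr (ae_of_all _ fun x hx => (hb0M x hx).trans (le_max_left _ _))
  have hellae : ∀ᵐ x ∂volume.restrict Ω,
      θ * (∑ j : Fin n, ‖Xop φ j u x‖ ^ 2)
        ≤ (∑ j : Fin n, ∑ k : Fin n,
            (starRingEnd ℂ) (a j k x) * Xop φ j u x * (starRingEnd ℂ) (Xop φ k u x)).re :=
    (ae_restrict_iff' hΩm).mpr (ae_of_all _ fun x hx => hell x hx (fun j => Xop φ j u x))
  set D : ℝ := ∫ x in Ω, ‖u x‖ ^ 2 * w x with hDdef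
  set E : Fin n → ℝ := fun j => ∫ x in Ω, ‖Xop φ j u x‖ ^ 2 * w x with hEdef
  have hmain : θ * ∑ j : Fin n, E j
      ≤ (∑ j : Fin n, ∑ k : Fin n, ∫ x in Ω,
          Xop φ j u x * (starRingEnd ℂ) (a j k x * Xop φ k u x) * ((w x : ℝ) : ℂ)).re :=
    main_bound (μ := volume.restrict Ω) (ξ := fun j => Xop φ j u) (A := a) (w := w)
      hM'0 hξmeas (fun j k => (ha j k).aestronglyMeasurable) hw hw0 haM'
      (fun j => hX2 j) hellae
  have hB : ∀ j : Fin n,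
      -((M' * δ / 2) * D + (M' * ε / 2) * E j)
        ≤ (∫ x in Ω, u x * (starRingEnd ℂ) (b j x * Xop φ j u x) * ((w x : ℝ) : ℂ)).re :=
    fun j => cross_bound hM'0 hδ hε hδε humeas (hξmeas j)
      (hb j).aestronglyMeasurable hw hw0 (hbM' j) hu2 (hX2 j)
  have hB' : ∀ j : Fin n,
      -((M' * ε / 2) * E j + (M' * δ / 2) * D)
        ≤ (∫ x in Ω, Xop φ j u x * (starRingEnd ℂ) (b' j x * u x) * ((w x : ℝ) : ℂ)).re :=
    fun j => cross_bound hM'0 hε hδ hεδ (hξmeas j) humeas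
      (hb' j).aestronglyMeasurable hw hw0 (hb'M' j) (hX2 j) hu2
  have hB0 : -((M' * 1 / 2) * D + (M' * 1 / 2) * D)
      ≤ (∫ x in Ω, u x * (starRingEnd ℂ) (b0 x * u x) * ((w x : ℝ) : ℂ)).re :=
    cross_bound hM'0 one_pos one_pos (mul_one 1) humeas humeas
      hb0.aestronglyMeasurable hw hw0 hb0M' hu2 hu2
  have hS1 : -(↑n * ((M' * δ / 2) * D) + (M' * ε / 2) * ∑ j : Fin n, E j)
      ≤ ∑ j : Fin n, (∫ x in Ω,
          u x * (starRingEnd ℂ) (b j x * Xop φ j u x) * ((w x : ℝ) : ℂ)).re := by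
    refine le_trans (le_of_eq ?_) (Finset.sum_le_sum fun j _ => hB j)
    have : ∑ j : Fin n, -(M' * δ / 2 * D + M' * ε / 2 * E j)
        = -(↑n * (M' * δ / 2 * D) + M' * ε / 2 * ∑ j : Fin n, E j) := by
      simp [Finset.sum_add_distrib, Finset.mul_sum]
    rw [← this]
  have hS2 : -(↑n * ((M' * δ / 2) * D) + (M' * ε / 2) * ∑ j : Fin n, E j)
      ≤ ∑ j : Fin n, (∫ x in Ω,
          Xop φ j u x * (starRingEnd ℂ) (b' j x * u x) * ((w x : ℝ) : ℂ)).re := by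
    refine le_trans (le_of_eq ?_) (Finset.sum_le_sum fun j _ => hB' j)
    have : ∑ j : Fin n, -(M' * ε / 2 * E j + M' * δ / 2 * D)
        = -(↑n * (M' * δ / 2 * D) + M' * ε / 2 * ∑ j : Fin n, E j) := by
      simp [Finset.sum_add_distrib, Finset.mul_sum]
      ring
    rw [← this]
  have hDre : (Dform Ω φ a b b' b0 u u).re
      = (∑ j : Fin n, ∑ k : Fin n, ∫ x in Ω,
          Xop φ j u x * (starRingEnd ℂ) (a j k x * Xop φ k u x) * ((w x : ℝ) : ℂ)).re
        + ∑ j : Fin n, (∫ x in Ω,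
            u x * (starRingEnd ℂ) (b j x * Xop φ j u x) * ((w x : ℝ) : ℂ)).re
        + ∑ j : Fin n, (∫ x in Ω,
            Xop φ j u x * (starRingEnd ℂ) (b' j x * u x) * ((w x : ℝ) : ℂ)).re
        + (∫ x in Ω, u x * (starRingEnd ℂ) (b0 x * u x) * ((w x : ℝ) : ℂ)).re := by
    simp only [Dform, Complex.add_re, Complex.re_sum, hwdef]
  rw [hDre]
  have hn0 : (0 : ℝ) ≤ (n : ℝ) := Nat.cast_nonneg n
  have hEsum : θ / 2 * (D + ∑ j : Fin n, E j)
      - (2 * n * M' ^ 2 / θ + M' + θ / 2) * D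
      = θ * ∑ j : Fin n, E j
        - (↑n * ((M' * δ / 2) * D) + (M' * ε / 2) * ∑ j : Fin n, E j)
        - (↑n * ((M' * δ / 2) * D) + (M' * ε / 2) * ∑ j : Fin n, E j)
        - ((M' * 1 / 2) * D + (M' * 1 / 2) * D) := by
    rw [e1, e2]; ring
  linarith [hmain, hS1, hS2, hB0]
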